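/- The function H attains its minimum over S (i.e., there exists x̄ ∈ S with H(x̄) ≤ H(x) for all x ∈ S) under either of the following assumptions: (i) there exists α > inf{H(x) : x ∈ S} such that N(I,J,α) is precompact (has compact closure); (ii) X is a reflexive Banach space, S and Θ_j for every j ∈ J are weakly closed, and there exists α > inf{H(x) : x ∈ S} such that N(I,J,α) is bounded. -/

import Mathlib

open Set Pointwise Filter Topology Bornology Function

variable {X : Type*} [NormedAddCommGroup X] [NormedSpace ℝ X]

/-- The Minkowski gauge of `F`: `ρ_F(x) = inf {t ≥ 0 : x ∈ t • F}`. -/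
noncomputable def rhoF (F : Set X) (x : X) : ℝ :=
  sInf {t : ℝ | 0 ≤ t ∧ x ∈ t • F}

/-- The maximal time function `C_F(x; Q) = sup {ρ_F(q - x) : q ∈ Q}`. -/
noncomputable def maxTime (F Q : Set X) (x : X) : ℝ :=
  sSup ((fun q => rhoF F (q - x)) '' Q)

/-- The minimal time function `T_F(x; Θ) = inf {ρ_F(q - x) : q ∈ Θ}`. -/
noncomputable def minTime (F Θ : Set X) (x : X) : ℝ :=
  sInf ((fun q => rhoF F (q - x)) '' Θ)

/-- `G(x) = max {C_F(x; Ω_i), T_F(x; Θ_j) : i ∈ I, j ∈ J}`. -/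
noncomputable def GFun {ι κ : Type*} (F : Set X) (I : Finset ι) (J : Finset κ)
    (Ω : ι → Set X) (Θ : κ → Set X) (x : X) : ℝ :=
  sSup ((fun i => maxTime F (Ω i) x) '' ↑I ∪ (fun j => minTime F (Θ j) x) '' ↑J)

/-- `H(x) = Σ_{i∈I} C_F(x; Ω_i) + Σ_{j∈J} T_F(x; Θ_j)`. -/
noncomputable def HFun {ι κ : Type*} (F : Set X) (I : Finset ι) (J : Finset κ)
    (Ω : ι → Set X) (Θ : κ → Set X) (x : X) : ℝ :=
  ∑ i ∈ I, maxTime F (Ω i) x + ∑ j ∈ J, minTime F (Θ j) x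

/-- `N(I,J,α) = S ∩ [⋂_{i∈I} ⋂_{ω∈Ω_i} (ω - α•F)] ∩ [⋂_{j∈J} (Θ_j - α•F)]`. -/
def NSet {ι κ : Type*} (F : Set X) (I : Finset ι) (J : Finset κ)
    (Ω : ι → Set X) (Θ : κ → Set X) (S : Set X) (α : ℝ) : Set X :=
  S ∩ (⋂ i ∈ I, ⋂ ω ∈ Ω i, (({ω} : Set X) - α • F)) ∩ ⋂ j ∈ J, (Θ j - α • F)

/-- A set is weakly closed if it is closed in the weak topology on `Y`. -/
def WeaklyClosed (Y : Type*) [NormedAddCommGroup Y] [NormedSpace ℝ Y] (A : Set Y) : Prop :=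
  IsClosed (toWeakSpace ℝ Y '' A)

/-- A normed space is reflexive if the canonical embedding into its double dual is surjective. -/
def IsReflexiveSpace (Y : Type*) [NormedAddCommGroup Y] [NormedSpace ℝ Y] : Prop :=
  Function.Surjective (NormedSpace.inclusionInDoubleDual ℝ Y)

/-! ### Auxiliary lemmas -/

lemma rhoF_eq_gauge' {F : Set X} (h0 : (0:X) ∈ F) : rhoF F = gauge F := by
  funext x
  rcases eq_or_ne x 0 with rfl | hx
  · rw [gauge_zero]
    refine le_antisymm (csInf_le ⟨0, fun t ht => ht.1⟩ ?_) (le_csInf ⟨0, ?_⟩ fun t ht => ht.1)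
    · exact ⟨le_refl 0, by rw [zero_smul_set ⟨0, h0⟩]; exact rfl⟩
    · exact ⟨le_refl 0, by rw [zero_smul_set ⟨0, h0⟩]; exact rfl⟩
  · unfold rhoF gauge
    congr 1
    ext t
    simp only [mem_setOf_eq, Set.mem_sep_iff, mem_Ioi]
    constructor
    · rintro ⟨ht, hm⟩
      rcases ht.lt_or_eq with h | rfl
      · exact ⟨h, hm⟩
      · rw [zero_smul_set ⟨0, h0⟩] at hm; exact absurd hm hx
    · rintro ⟨ht, hm⟩; exact ⟨ht.le, hm⟩

lemma smul_subset_smul_of_le' {F : Set X} (hconv : Convex ℝ F) (h0 : (0:X) ∈ F)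
    {s t : ℝ} (hs : 0 ≤ s) (hst : s ≤ t) : s • F ⊆ t • F := by
  rcases hs.lt_or_eq with hs' | rfl
  · have ht : (0:ℝ) < t := hs'.trans_le hst
    rintro y ⟨z, hz, rfl⟩
    refine ⟨(s / t) • z,
      hconv.smul_mem_of_zero_mem h0 hz ⟨by positivity, div_le_one_of_le₀ hst ht.le⟩, ?_⟩
    show t • (s/t) • z = s • z
    rw [smul_smul, mul_div_cancel₀ _ ht.ne']
  · rintro y hy
    rw [zero_smul_set ⟨0, h0⟩] at hy
    rcases hy with rfl
    exact ⟨0, h0, by simp⟩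

lemma mem_smul_of_gauge_lt' {F : Set X} (hconv : Convex ℝ F) (h0 : (0:X) ∈ F)
    (habs : Absorbent ℝ F) {x : X} {t : ℝ} (h : gauge F x < t) : x ∈ t • F := by
  obtain ⟨b, hb0, hbt, hxb⟩ := exists_lt_of_gauge_lt habs h
  exact smul_subset_smul_of_le' hconv h0 hb0.le hbt.le hxb

lemma toWeakSpace_image_eq' (A : Set X) :
    toWeakSpace ℝ X '' A = (A : Set (WeakSpace ℝ X)) := by
  ext x
  exact ⟨fun ⟨y, hy, hxy⟩ => hxy ▸ hy, fun h => ⟨x, h, rfl⟩⟩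

lemma isClosed_weak_of_convex' {C : Set X} (hconv : Convex ℝ C) (hcl : IsClosed C) :
    @IsClosed (WeakSpace ℝ X) _ C := by
  refine isOpen_compl_iff.mp (isOpen_iff_mem_nhds.mpr ?_)
  intro x hx
  obtain ⟨f, u, hfC, hfx⟩ := geometric_hahn_banach_closed_point hconv hcl hx
  have hφ : Continuous (fun y : WeakSpace ℝ X => f ((toWeakSpace ℝ X).symm y)) :=
    WeakBilin.eval_continuous ((topDualPairing ℝ X).flip) f
  have hopen : IsOpen {y : WeakSpace ℝ X | u < f ((toWeakSpace ℝ X).symm y)} :=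
    isOpen_Ioi.preimage hφ
  refine mem_of_superset (hopen.mem_nhds hfx) ?_
  intro y hy hyC
  exact ((hfC y hyC).trans hy).false

lemma isCompact_weak_of_isBounded_isClosed' (hrefl : IsReflexiveSpace X) {A : Set X}
    (hb : IsBounded A) (hcl : @IsClosed (WeakSpace ℝ X) _ A) :
    @IsCompact (WeakSpace ℝ X) _ A := by
  obtain ⟨R, hR⟩ := hb.subset_closedBall (0:X)
  set B : Set X := Metric.closedBall (0:X) R with hBdef
  suffices hBc : @IsCompact (WeakSpace ℝ X) _ B by
    exact hBc.of_isClosed_subset hcl hR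
  have hsurj : Function.Surjective (NormedSpace.inclusionInDoubleDualLi ℝ (E := X)) := hrefl
  let e : X ≃ₗᵢ[ℝ] StrongDual ℝ (StrongDual ℝ X) :=
    LinearIsometryEquiv.ofSurjective _ hsurj
  let g : WeakDual ℝ (StrongDual ℝ X) → WeakSpace ℝ X :=
    fun ψ => toWeakSpace ℝ X (e.symm ψ)
  have hg : Continuous g := by
    apply WeakBilin.continuous_of_continuous_eval
    intro f
    have : (fun ψ : WeakDual ℝ (StrongDual ℝ X) =>
        (topDualPairing ℝ X).flip (g ψ) f) = fun ψ => ψ f := by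
      funext ψ
      have h1 : (topDualPairing ℝ X).flip (g ψ) f = f (e.symm ψ) := rfl
      have h2 : e (e.symm ψ) = ψ := e.apply_symm_apply ψ
      have h3 : e (e.symm ψ) f = f (e.symm ψ) := rfl
      rw [h1, ← h3, h2]
      rfl
    rw [this]
    exact WeakDual.eval_continuous f
  have himg : B =
      g '' (WeakDual.toStrongDual ⁻¹' Metric.closedBall 0 R) := by
    ext x
    simp only [hBdef, mem_image, mem_preimage, Metric.mem_closedBall,
      dist_zero_right]
    constructor
    · intro hx
      refine ⟨e x, ?_, ?_⟩
      · show dist (e x) 0 ≤ R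
        exact (dist_zero_right (e x)).trans_le ((e.norm_map x).trans_le hx)
      · show toWeakSpace ℝ X (e.symm (e x)) = x
        simp
        rfl
    · rintro ⟨ψ, hψ, rfl⟩
      show ‖e.symm ψ‖ ≤ R
      calc ‖e.symm ψ‖ = ‖WeakDual.toStrongDual ψ‖ := e.symm.norm_map ψ
        _ = dist (WeakDual.toStrongDual ψ) 0 := (dist_zero_right (WeakDual.toStrongDual ψ : StrongDual ℝ (StrongDual ℝ X))).symm
        _ ≤ R := hψ
  have hcmp : @IsCompact (WeakSpace ℝ X) _
      (g '' (WeakDual.toStrongDual ⁻¹' Metric.closedBall 0 R)) :=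
    IsCompact.image (WeakDual.isCompact_closedBall (𝕜 := ℝ) (E := StrongDual ℝ X) 0 R) hg
  exact himg ▸ hcmp

/-- Abstract existence of minimizers from compactness of one sublevel set and
closedness of all sublevel sets. -/
lemma exists_min_of_sublevels {Y : Type*} [TopologicalSpace Y] {f : Y → ℝ} {S : Set Y} {x0 : Y}
    (hx0 : x0 ∈ S) (hcl : ∀ c : ℝ, IsClosed {x | x ∈ S ∧ f x ≤ c})
    (hcp : IsCompact {x | x ∈ S ∧ f x ≤ f x0}) :
    ∃ z ∈ S, ∀ x ∈ S, f z ≤ f x := by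
  classical
  set A := {x | x ∈ S ∧ f x ≤ f x0} with hAdef
  have hA0 : x0 ∈ A := ⟨hx0, le_rfl⟩
  haveI : Nonempty A := ⟨⟨x0, hA0⟩⟩
  let Z : A → Set Y := fun a => {x | x ∈ S ∧ f x ≤ min (f a) (f x0)}
  have hZsub : ∀ a, Z a ⊆ A := fun a x hx => ⟨hx.1, hx.2.trans (min_le_right _ _)⟩
  have hZcl : ∀ a, IsClosed (Z a) := fun a => hcl _
  have hZcp : ∀ a, IsCompact (Z a) := fun a => hcp.of_isClosed_subset (hZcl a) (hZsub a)
  have hZne : ∀ a, (Z a).Nonempty := fun a => ⟨a, a.2.1, le_min le_rfl a.2.2⟩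
  have hdir : Directed (· ⊇ ·) Z := by
    intro a b
    rcases le_total (f a) (f b) with h | h
    · exact ⟨a, subset_rfl, fun x hx =>
        ⟨hx.1, hx.2.trans (min_le_min h le_rfl)⟩⟩
    · exact ⟨b, fun x hx => ⟨hx.1, hx.2.trans (min_le_min h le_rfl)⟩, subset_rfl⟩
  obtain ⟨z, hz⟩ :=
    IsCompact.nonempty_iInter_of_directed_nonempty_isCompact_isClosed Z hdir hZne hZcp hZcl
  refine ⟨z, (mem_iInter.1 hz ⟨x0, hA0⟩).1, ?_⟩
  intro x hx
  rcases le_total (f x) (f x0) with h | h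
  · exact ((mem_iInter.1 hz ⟨x, hx, h⟩).2).trans (min_le_left _ _)
  · exact (((mem_iInter.1 hz ⟨x0, hA0⟩).2).trans (min_le_left _ _)).trans h

section GaugeFacts

variable {F : Set X} {r : ℝ}

lemma gauge_le_norm_div (hr : 0 < r) (hball : Metric.ball (0:X) r ⊆ F) (x : X) :
    gauge F x ≤ ‖x‖ / r := by
  have h := gauge_mono (absorbent_ball_zero hr) hball x
  rwa [gauge_ball hr.le] at h

lemma gauge_le_gauge_add_norm (hconv : Convex ℝ F) (habs : Absorbent ℝ F)
    (hr : 0 < r) (hball : Metric.ball (0:X) r ⊆ F) (a b : X) :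
    gauge F a ≤ gauge F b + ‖a - b‖ / r := by
  have h1 : gauge F (b + (a - b)) ≤ gauge F b + gauge F (a - b) :=
    gauge_add_le hconv habs b (a - b)
  rw [add_sub_cancel] at h1
  exact h1.trans (add_le_add_right (gauge_le_norm_div hr hball _) _)

lemma continuous_gauge_sub (hconv : Convex ℝ F) (habs : Absorbent ℝ F)
    (hr : 0 < r) (hball : Metric.ball (0:X) r ⊆ F) (q : X) :
    Continuous fun z : X => gauge F (q - z) := by
  refine (LipschitzWith.of_dist_le_mul (K := Real.toNNReal (1/r)) ?_).continuous
  intro z w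
  rw [Real.dist_eq, Real.coe_toNNReal _ (by positivity), abs_sub_le_iff]
  have e1 : (q - z) - (q - w) = w - z := by abel
  have e2 : (q - w) - (q - z) = z - w := by abel
  constructor
  · have := gauge_le_gauge_add_norm hconv habs hr hball (q - z) (q - w)
    rw [e1] at this
    have : gauge F (q - z) - gauge F (q - w) ≤ ‖w - z‖ / r := by linarith
    calc gauge F (q - z) - gauge F (q - w) ≤ ‖w - z‖ / r := this
      _ = 1 / r * dist z w := by rw [dist_eq_norm, norm_sub_rev]; ring
  · have := gauge_le_gauge_add_norm hconv habs hr hball (q - w) (q - z)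
    rw [e2] at this
    have : gauge F (q - w) - gauge F (q - z) ≤ ‖z - w‖ / r := by linarith
    calc gauge F (q - w) - gauge F (q - z) ≤ ‖z - w‖ / r := this
      _ = 1 / r * dist z w := by rw [dist_eq_norm]; ring

lemma lsc_weak_gauge_sub (hconv : Convex ℝ F) (habs : Absorbent ℝ F)
    (hr : 0 < r) (hball : Metric.ball (0:X) r ⊆ F) (q : X) :
    @LowerSemicontinuous (WeakSpace ℝ X) ℝ _ _ (fun z : X => gauge F (q - z)) := by
  rw [lowerSemicontinuous_iff_isClosed_preimage]
  intro c
  have hconvlvl : Convex ℝ {z : X | gauge F (q - z) ≤ c} := by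
    intro a ha b hb s t hs ht hst
    have e : q - (s • a + t • b) = s • (q - a) + t • (q - b) := by
      have : q = s • q + t • q := by rw [← add_smul, hst, one_smul]
      rw [smul_sub, smul_sub]
      nth_rewrite 1 [this]
      abel
    show gauge F (q - (s • a + t • b)) ≤ c
    rw [e]
    calc gauge F (s • (q - a) + t • (q - b))
        ≤ gauge F (s • (q - a)) + gauge F (t • (q - b)) := gauge_add_le hconv habs _ _
      _ = s * gauge F (q - a) + t * gauge F (q - b) := by
          rw [gauge_smul_of_nonneg hs, gauge_smul_of_nonneg ht, smul_eq_mul, smul_eq_mul]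
      _ ≤ s * c + t * c := by
          exact add_le_add (mul_le_mul_of_nonneg_left ha hs) (mul_le_mul_of_nonneg_left hb ht)
      _ = c := by rw [← add_mul, hst, one_mul]
  have hcllvl : IsClosed {z : X | gauge F (q - z) ≤ c} :=
    isClosed_le (continuous_gauge_sub hconv habs hr hball q) continuous_const
  exact isClosed_weak_of_convex' (X := X) hconvlvl hcllvl

end GaugeFacts

section TimeFacts

variable {F : Set X} {r : ℝ} {Q : Set X}

lemma maxTime_eq' (h0 : (0:X) ∈ F) (x : X) :
    maxTime F Q x = sSup ((fun q => gauge F (q - x)) '' Q) := by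
  simp [maxTime, rhoF_eq_gauge' h0]

lemma minTime_eq' (h0 : (0:X) ∈ F) (x : X) :
    minTime F Q x = sInf ((fun q => gauge F (q - x)) '' Q) := by
  simp [minTime, rhoF_eq_gauge' h0]

lemma bddAbove_gauge_image (hr : 0 < r) (hball : Metric.ball (0:X) r ⊆ F)
    (hQb : IsBounded Q) (x : X) :
    BddAbove ((fun q => gauge F (q - x)) '' Q) := by
  obtain ⟨M, hM⟩ := hQb.exists_norm_le
  refine ⟨(M + ‖x‖) / r, ?_⟩
  rintro a ⟨q, hq, rfl⟩
  refine (gauge_le_norm_div hr hball _).trans ?_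
  have : ‖q - x‖ ≤ M + ‖x‖ := (norm_sub_le _ _).trans (by gcongr; exact hM q hq)
  gcongr

lemma le_maxTime (h0 : (0:X) ∈ F) (hr : 0 < r) (hball : Metric.ball (0:X) r ⊆ F)
    (hQb : IsBounded Q) {q x : X} (hq : q ∈ Q) :
    gauge F (q - x) ≤ maxTime F Q x := by
  rw [maxTime_eq' h0]
  exact le_csSup (bddAbove_gauge_image hr hball hQb x) ⟨q, hq, rfl⟩

lemma maxTime_nonneg (h0 : (0:X) ∈ F) (hr : 0 < r) (hball : Metric.ball (0:X) r ⊆ F)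
    (hQne : Q.Nonempty) (hQb : IsBounded Q) (x : X) :
    0 ≤ maxTime F Q x := by
  obtain ⟨q, hq⟩ := hQne
  exact (gauge_nonneg _).trans (le_maxTime h0 hr hball hQb hq)

lemma maxTime_le_add (hconv : Convex ℝ F) (h0 : (0:X) ∈ F) (habs : Absorbent ℝ F)
    (hr : 0 < r) (hball : Metric.ball (0:X) r ⊆ F)
    (hQne : Q.Nonempty) (hQb : IsBounded Q) (x y : X) :
    maxTime F Q x ≤ maxTime F Q y + ‖x - y‖ / r := by
  rw [maxTime_eq' h0]
  refine csSup_le (hQne.image _) ?_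
  rintro a ⟨q, hq, rfl⟩
  have h1 : gauge F (q - x) ≤ gauge F (q - y) + ‖(q - x) - (q - y)‖ / r :=
    gauge_le_gauge_add_norm hconv habs hr hball _ _
  have e : (q - x) - (q - y) = y - x := by abel
  rw [e, norm_sub_rev] at h1
  exact h1.trans (add_le_add_left (le_maxTime h0 hr hball hQb hq) _)

lemma continuous_maxTime (hconv : Convex ℝ F) (h0 : (0:X) ∈ F) (habs : Absorbent ℝ F)
    (hr : 0 < r) (hball : Metric.ball (0:X) r ⊆ F)
    (hQne : Q.Nonempty) (hQb : IsBounded Q) :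
    Continuous (maxTime F Q) := by
  refine (LipschitzWith.of_dist_le_mul (K := Real.toNNReal (1/r)) ?_).continuous
  intro z w
  rw [Real.dist_eq, Real.coe_toNNReal _ (by positivity), abs_sub_le_iff]
  constructor
  · have := maxTime_le_add hconv h0 habs hr hball hQne hQb z w
    rw [dist_eq_norm]
    linarith [this, show ‖z - w‖ / r = 1/r * ‖z - w‖ by ring]
  · have := maxTime_le_add hconv h0 habs hr hball hQne hQb w z
    rw [dist_eq_norm, norm_sub_rev z w] at *
    linarith [this, show ‖w - z‖ / r = 1/r * ‖w - z‖ by ring]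

lemma lsc_weak_maxTime (hconv : Convex ℝ F) (h0 : (0:X) ∈ F) (habs : Absorbent ℝ F)
    (hr : 0 < r) (hball : Metric.ball (0:X) r ⊆ F)
    (hQne : Q.Nonempty) (hQb : IsBounded Q) :
    @LowerSemicontinuous (WeakSpace ℝ X) ℝ _ _ (fun x : X => maxTime F Q x) := by
  intro x y hy
  have hy' : y < maxTime F Q ((toWeakSpace ℝ X).symm x) := hy
  rw [maxTime_eq' h0] at hy'
  obtain ⟨a, ⟨q, hq, rfl⟩, hya⟩ := exists_lt_of_lt_csSup (hQne.image _) hy'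
  have hlsc := lsc_weak_gauge_sub hconv habs hr hball q x y hya
  exact hlsc.mono fun z hz => hz.trans_le (le_maxTime h0 hr hball hQb hq)

lemma bddBelow_gauge_image (x : X) :
    BddBelow ((fun q => gauge F (q - x)) '' Q) :=
  ⟨0, by rintro a ⟨q, hq, rfl⟩; exact gauge_nonneg _⟩

lemma minTime_le (h0 : (0:X) ∈ F) {q x : X} (hq : q ∈ Q) :
    minTime F Q x ≤ gauge F (q - x) := by
  rw [minTime_eq' h0]
  exact csInf_le (bddBelow_gauge_image x) ⟨q, hq, rfl⟩

lemma minTime_nonneg (h0 : (0:X) ∈ F) (hQne : Q.Nonempty) (x : X) :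
    0 ≤ minTime F Q x := by
  rw [minTime_eq' h0]
  exact le_csInf (hQne.image _) (by rintro a ⟨q, hq, rfl⟩; exact gauge_nonneg _)

lemma exists_gauge_lt_of_minTime_lt (h0 : (0:X) ∈ F) (hQne : Q.Nonempty) {x : X} {t : ℝ}
    (h : minTime F Q x < t) : ∃ q ∈ Q, gauge F (q - x) < t := by
  rw [minTime_eq' h0] at h
  obtain ⟨a, ⟨q, hq, rfl⟩, ha⟩ := exists_lt_of_csInf_lt (hQne.image _) h
  exact ⟨q, hq, ha⟩

lemma minTime_le_add (hconv : Convex ℝ F) (h0 : (0:X) ∈ F) (habs : Absorbent ℝ F)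
    (hr : 0 < r) (hball : Metric.ball (0:X) r ⊆ F) (hQne : Q.Nonempty) (x y : X) :
    minTime F Q x ≤ minTime F Q y + ‖x - y‖ / r := by
  have key : minTime F Q x - ‖x - y‖ / r ≤ sInf ((fun q => gauge F (q - y)) '' Q) := by
    refine le_csInf (hQne.image _) ?_
    rintro a ⟨q, hq, rfl⟩
    have h1 : gauge F (q - x) ≤ gauge F (q - y) + ‖(q - x) - (q - y)‖ / r :=
      gauge_le_gauge_add_norm hconv habs hr hball _ _
    have e : (q - x) - (q - y) = y - x := by abel
    rw [e, norm_sub_rev] at h1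
    have h2 : minTime F Q x ≤ gauge F (q - x) := minTime_le h0 hq
    linarith
  rw [minTime_eq' h0 y] at *
  linarith

lemma continuous_minTime (hconv : Convex ℝ F) (h0 : (0:X) ∈ F) (habs : Absorbent ℝ F)
    (hr : 0 < r) (hball : Metric.ball (0:X) r ⊆ F) (hQne : Q.Nonempty) :
    Continuous (minTime F Q) := by
  refine (LipschitzWith.of_dist_le_mul (K := Real.toNNReal (1/r)) ?_).continuous
  intro z w
  rw [Real.dist_eq, Real.coe_toNNReal _ (by positivity), abs_sub_le_iff]
  constructor
  · have := minTime_le_add hconv h0 habs hr hball hQne z w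
    rw [dist_eq_norm]
    linarith [this, show ‖z - w‖ / r = 1/r * ‖z - w‖ by ring]
  · have := minTime_le_add hconv h0 habs hr hball hQne w z
    rw [dist_eq_norm, norm_sub_rev z w] at *
    linarith [this, show ‖w - z‖ / r = 1/r * ‖w - z‖ by ring]

end TimeFacts

section WeakMin

variable {F : Set X} {r : ℝ} {Q : Set X}

lemma weak_closed_sub {K : Set X} (hQw : @IsClosed (WeakSpace ℝ X) _ Q)
    (hK : @IsCompact (WeakSpace ℝ X) _ K) :
    @IsClosed (WeakSpace ℝ X) _ (Q - K) := by
  have h1 : Q - K = -K + Q := by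
    ext z
    simp only [Set.mem_sub, Set.mem_add, Set.mem_neg]
    constructor
    · rintro ⟨a, ha, b, hb, rfl⟩
      exact ⟨-b, by simpa using hb, a, ha, by abel⟩
    · rintro ⟨u, hu, v, hv, rfl⟩
      exact ⟨v, hv, -u, hu, by abel⟩
  rw [h1]
  exact @IsClosed.add_left_of_isCompact (WeakSpace ℝ X) _ _ _ _ _ hQw hK.neg

lemma lsc_weak_minTime (hconv : Convex ℝ F) (h0 : (0:X) ∈ F) (habs : Absorbent ℝ F)
    (hQne : Q.Nonempty) (hQw : @IsClosed (WeakSpace ℝ X) _ Q)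
    (hFwc : ∀ t : ℝ, 0 < t → @IsCompact (WeakSpace ℝ X) _ (t • F)) :
    @LowerSemicontinuous (WeakSpace ℝ X) ℝ _ _ (fun x : X => minTime F Q x) := by
  refine lowerSemicontinuous_iff_isClosed_preimage.mpr ?_
  intro c
  have hpre : (fun x : X => minTime F Q x) ⁻¹' Iic c = {x : X | minTime F Q x ≤ c} := rfl
  show @IsClosed (WeakSpace ℝ X) _ {x : X | minTime F Q x ≤ c}
  rcases lt_or_ge c 0 with hc | hc
  · have : {x : X | minTime F Q x ≤ c} = ∅ := by
      ext x
      simp only [mem_setOf_eq, mem_empty_iff_false, iff_false, not_le]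
      exact hc.trans_le (minTime_nonneg h0 hQne x)
    exact (congrArg (@IsClosed (WeakSpace ℝ X) _) this).mpr isClosed_empty
  · have hset : {x : X | minTime F Q x ≤ c} =
        ⋂ n : ℕ, (Q - (c + 1/(n+1)) • F) := by
      ext x
      simp only [mem_setOf_eq, mem_iInter]
      constructor
      · intro hx n
        have hpos : (0:ℝ) < 1/(n+1) := by positivity
        have hlt : minTime F Q x < c + 1/(n+1) := lt_of_le_of_lt hx (by linarith)
        obtain ⟨q, hq, hgq⟩ := exists_gauge_lt_of_minTime_lt h0 hQne hlt
        have hmem : q - x ∈ (c + 1/(n+1)) • F := mem_smul_of_gauge_lt' hconv h0 habs hgq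
        exact ⟨q, hq, q - x, hmem, sub_sub_cancel q x⟩
      · intro hx
        refine le_of_forall_pos_le_add ?_
        intro ε hε
        obtain ⟨n, hn⟩ := exists_nat_one_div_lt hε
        obtain ⟨q, hq, y, hy, hqyx⟩ := hx n
        have hqx : q - x ∈ (c + 1/(n+1)) • F := by
          have : q - x = y := by rw [← hqyx, sub_sub_cancel]
          rwa [this]
        have h1 : minTime F Q x ≤ gauge F (q - x) := minTime_le h0 hq
        have h2 : gauge F (q - x) ≤ c + 1/(n+1) :=
          gauge_le_of_mem (by positivity) hqx
        have : (1:ℝ)/(n+1) < ε := hn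
        linarith
    refine (congrArg (@IsClosed (WeakSpace ℝ X) _) hset).mpr ?_
    refine isClosed_iInter ?_
    intro n
    have hpos : (0:ℝ) < c + 1/(n+1) := by positivity
    exact weak_closed_sub hQw (hFwc _ hpos)

end WeakMin

/-- Proposition 2.4. -/
theorem stmt3
    {ι κ : Type*} (F : Set X) (I : Finset ι) (J : Finset κ)
    (Ω : ι → Set X) (Θ : κ → Set X) (S : Set X)
    (hFc : IsClosed F) (hFb : IsBounded F) (hFconv : Convex ℝ F)
    (hF0 : (0 : X) ∈ interior F)
    (hΩne : ∀ i ∈ I, (Ω i).Nonempty) (hΩc : ∀ i ∈ I, IsClosed (Ω i))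
    (hΩb : ∀ i ∈ I, IsBounded (Ω i))
    (hΘne : ∀ j ∈ J, (Θ j).Nonempty) (hΘc : ∀ j ∈ J, IsClosed (Θ j))
    (hSne : S.Nonempty) (hSc : IsClosed S)
    (hIJ : I.Nonempty ∨ J.Nonempty)
    (hyp :
      (∃ α : ℝ, sInf (HFun F I J Ω Θ '' S) < α ∧
        IsCompact (closure (NSet F I J Ω Θ S α))) ∨
      (CompleteSpace X ∧ IsReflexiveSpace X ∧ WeaklyClosed X S ∧
        (∀ j ∈ J, WeaklyClosed X (Θ j)) ∧
        ∃ α : ℝ, sInf (HFun F I J Ω Θ '' S) < α ∧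
          IsBounded (NSet F I J Ω Θ S α))) :
    ∃ xbar ∈ S, ∀ x ∈ S, HFun F I J Ω Θ xbar ≤ HFun F I J Ω Θ x := by
  classical
  have h0F : (0:X) ∈ F := interior_subset hF0
  have hnhds : F ∈ 𝓝 (0:X) := mem_interior_iff_mem_nhds.1 hF0
  have habs : Absorbent ℝ F := absorbent_nhds_zero hnhds
  obtain ⟨r, hr, hball⟩ := Metric.mem_nhds_iff.1 hnhds
  have hmaxnn : ∀ x : X, ∀ i ∈ I, 0 ≤ maxTime F (Ω i) x := fun x i hi =>
    maxTime_nonneg h0F hr hball (hΩne i hi) (hΩb i hi) x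
  have hminnn : ∀ x : X, ∀ j ∈ J, 0 ≤ minTime F (Θ j) x := fun x j hj =>
    minTime_nonneg h0F (hΘne j hj) x
  have hsum1nn : ∀ x : X, 0 ≤ ∑ i ∈ I, maxTime F (Ω i) x := fun x =>
    Finset.sum_nonneg (hmaxnn x)
  have hsum2nn : ∀ x : X, 0 ≤ ∑ j ∈ J, minTime F (Θ j) x := fun x =>
    Finset.sum_nonneg (hminnn x)
  have hmax_le_H : ∀ x : X, ∀ i ∈ I, maxTime F (Ω i) x ≤ HFun F I J Ω Θ x := by
    intro x i hi
    have h1 : maxTime F (Ω i) x ≤ ∑ i ∈ I, maxTime F (Ω i) x :=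
      Finset.single_le_sum (fun k hk => hmaxnn x k hk) hi
    exact h1.trans (le_add_of_nonneg_right (hsum2nn x))
  have hmin_le_H : ∀ x : X, ∀ j ∈ J, minTime F (Θ j) x ≤ HFun F I J Ω Θ x := by
    intro x j hj
    have h1 : minTime F (Θ j) x ≤ ∑ j ∈ J, minTime F (Θ j) x :=
      Finset.single_le_sum (fun k hk => hminnn x k hk) hj
    exact h1.trans (le_add_of_nonneg_left (hsum1nn x))
  have key : ∀ α : ℝ, ∀ x ∈ S, HFun F I J Ω Θ x < α → x ∈ NSet F I J Ω Θ S α := by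
    intro α x hxS hxα
    refine ⟨⟨hxS, ?_⟩, ?_⟩
    · refine mem_iInter₂.2 fun i hi => mem_iInter₂.2 fun ω hω => ?_
      have h2 : gauge F (ω - x) < α :=
        lt_of_le_of_lt ((le_maxTime h0F hr hball (hΩb i hi) hω).trans (hmax_le_H x i hi)) hxα
      have h3 : ω - x ∈ α • F := mem_smul_of_gauge_lt' hFconv h0F habs h2
      have h4 := Set.sub_mem_sub (show ω ∈ ({ω} : Set X) from rfl) h3
      rwa [sub_sub_cancel] at h4
    · refine mem_iInter₂.2 fun j hj => ?_
      have h2 : minTime F (Θ j) x < α := lt_of_le_of_lt (hmin_le_H x j hj) hxα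
      obtain ⟨q, hq, hgq⟩ := exists_gauge_lt_of_minTime_lt h0F (hΘne j hj) h2
      have h3 : q - x ∈ α • F := mem_smul_of_gauge_lt' hFconv h0F habs hgq
      have h4 := Set.sub_mem_sub hq h3
      rwa [sub_sub_cancel] at h4
  rcases hyp with ⟨α, hα, hNcp⟩ | ⟨_, hrefl, hSw, hΘw, α, hα, hNb⟩
  · obtain ⟨_, ⟨x0, hx0S, rfl⟩, hx0α⟩ :=
      exists_lt_of_csInf_lt (hSne.image (HFun F I J Ω Θ)) hα
    have hAsub : {x | x ∈ S ∧ HFun F I J Ω Θ x ≤ HFun F I J Ω Θ x0} ⊆ NSet F I J Ω Θ S α :=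
      fun x hx => key α x hx.1 (lt_of_le_of_lt hx.2 hx0α)
    have hHcont : Continuous (HFun F I J Ω Θ) := by
      show Continuous fun x : X =>
        (∑ i ∈ I, maxTime F (Ω i) x) + ∑ j ∈ J, minTime F (Θ j) x
      refine Continuous.add ?_ ?_
      · exact continuous_finset_sum _ fun i hi =>
          continuous_maxTime hFconv h0F habs hr hball (hΩne i hi) (hΩb i hi)
      · exact continuous_finset_sum _ fun j hj =>
          continuous_minTime hFconv h0F habs hr hball (hΘne j hj)
    have hcl : ∀ c : ℝ, IsClosed {x | x ∈ S ∧ HFun F I J Ω Θ x ≤ c} := by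
      intro c
      have he : {x | x ∈ S ∧ HFun F I J Ω Θ x ≤ c} = S ∩ HFun F I J Ω Θ ⁻¹' Iic c := rfl
      rw [he]
      exact hSc.inter (isClosed_le hHcont continuous_const)
    have hcp : IsCompact {x | x ∈ S ∧ HFun F I J Ω Θ x ≤ HFun F I J Ω Θ x0} :=
      hNcp.of_isClosed_subset (hcl _) (hAsub.trans subset_closure)
    exact exists_min_of_sublevels hx0S hcl hcp
  · obtain ⟨_, ⟨x0, hx0S, rfl⟩, hx0α⟩ :=
      exists_lt_of_csInf_lt (hSne.image (HFun F I J Ω Θ)) hα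
    have hAsub : {x | x ∈ S ∧ HFun F I J Ω Θ x ≤ HFun F I J Ω Θ x0} ⊆ NSet F I J Ω Θ S α :=
      fun x hx => key α x hx.1 (lt_of_le_of_lt hx.2 hx0α)
    have hSW : @IsClosed (WeakSpace ℝ X) _ S := toWeakSpace_image_eq' S ▸ hSw
    have hFwc : ∀ t : ℝ, 0 < t → @IsCompact (WeakSpace ℝ X) _ (t • F) := fun t ht =>
      isCompact_weak_of_isBounded_isClosed' hrefl (hFb.smul₀ t)
        (isClosed_weak_of_convex' (hFconv.smul t) (hFc.smul_of_ne_zero ht.ne'))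
    have hHlsc : @LowerSemicontinuous (WeakSpace ℝ X) ℝ _ _ (fun x : X => HFun F I J Ω Θ x) := by
      have h1 : @LowerSemicontinuous (WeakSpace ℝ X) ℝ _ _
          (fun x : X => ∑ i ∈ I, maxTime F (Ω i) x) :=
        lowerSemicontinuous_sum fun i hi =>
          lsc_weak_maxTime hFconv h0F habs hr hball (hΩne i hi) (hΩb i hi)
      have h2 : @LowerSemicontinuous (WeakSpace ℝ X) ℝ _ _
          (fun x : X => ∑ j ∈ J, minTime F (Θ j) x) :=
        lowerSemicontinuous_sum fun j hj =>
          lsc_weak_minTime hFconv h0F habs (hΘne j hj)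
            (toWeakSpace_image_eq' (Θ j) ▸ hΘw j hj) hFwc
      exact h1.add h2
    have hcl : ∀ c : ℝ, @IsClosed (WeakSpace ℝ X) _ {x | x ∈ S ∧ HFun F I J Ω Θ x ≤ c} :=
      fun c => hSW.inter (hHlsc.isClosed_preimage c)
    have hcp : @IsCompact (WeakSpace ℝ X) _
        {x | x ∈ S ∧ HFun F I J Ω Θ x ≤ HFun F I J Ω Θ x0} :=
      isCompact_weak_of_isBounded_isClosed' hrefl (hNb.subset hAsub) (hcl _)
    exact exists_min_of_sublevels (Y := WeakSpace ℝ X) hx0S hcl hcp
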